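/- Let pa, ε1, ε2, ε3 be random variables on a probability space taking values in finite sets, define Y = g1(pa, ε1), nd = g2(pa, ε2), dc = g3(Y, ε3) for arbitrary functions g1, g2, g3, where ε1 is independent of pa, ε2 is independent of the pair (pa, ε1), and ε3 is independent of the triple (pa, ε1, ε2). Let X = h(pa, nd, dc) for an injective function h, and let Z = φ(X) for any function φ. Then for every real λ ≥ 0, I(Z; (Y, nd)) − λ·I(Z; (nd, dc)) ≥ I(Z; Y) − λ·I(Z; X). -/

import Mathlib

open Finset

/-- Probability of the event `U = u` under the weight function `μ`
on a finite sample space. -/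
noncomputable def probOf {Ω α : Type} [Fintype Ω] [DecidableEq α]
    (μ : Ω → ℝ) (U : Ω → α) (u : α) : ℝ :=
  ∑ ω, if U ω = u then μ ω else 0

/-- Shannon entropy (natural logarithm) of the random variable `U`
under the weight function `μ`. -/
noncomputable def entropy {Ω α : Type} [Fintype Ω] [Fintype α] [DecidableEq α]
    (μ : Ω → ℝ) (U : Ω → α) : ℝ :=
  -∑ u, probOf μ U u * Real.log (probOf μ U u)

/-- Mutual information `I(U;V) = H(U) + H(V) - H(U,V)`. -/
noncomputable def mutualInfo {Ω α β : Type} [Fintype Ω] [Fintype α] [Fintype β]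
    [DecidableEq α] [DecidableEq β] (μ : Ω → ℝ) (U : Ω → α) (V : Ω → β) : ℝ :=
  entropy μ U + entropy μ V - entropy μ (fun ω => (U ω, V ω))

/-- The conditional weight function given the event `W = w`. -/
noncomputable def condWeight {Ω γ : Type} [Fintype Ω] [DecidableEq γ]
    (μ : Ω → ℝ) (W : Ω → γ) (w : γ) : Ω → ℝ :=
  fun ω => if W ω = w then μ ω / probOf μ W w else 0

/-- Conditional mutual information
`I(U;V|W) = ∑ w, P(W = w) * I(U;V | W = w)`. -/
noncomputable def condMutualInfo {Ω α β γ : Type} [Fintype Ω]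
    [Fintype α] [Fintype β] [Fintype γ]
    [DecidableEq α] [DecidableEq β] [DecidableEq γ]
    (μ : Ω → ℝ) (U : Ω → α) (V : Ω → β) (W : Ω → γ) : ℝ :=
  ∑ w, probOf μ W w * mutualInfo (condWeight μ W w) U V

/-- `μ` is a probability weight function on the finite sample space. -/
def IsProb {Ω : Type} [Fintype Ω] (μ : Ω → ℝ) : Prop :=
  (∀ ω, 0 ≤ μ ω) ∧ ∑ ω, μ ω = 1

/-- Independence of two finite-valued random variables. -/
def IndepRV {Ω α β : Type} [Fintype Ω] [DecidableEq α] [DecidableEq β]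
    (μ : Ω → ℝ) (U : Ω → α) (V : Ω → β) : Prop :=
  ∀ u v, probOf μ (fun ω => (U ω, V ω)) (u, v) = probOf μ U u * probOf μ V v

set_option linter.unusedSectionVars false

section Lemmas
variable {Ω α β γ : Type} [Fintype Ω] [Fintype α] [Fintype β] [Fintype γ]
  [DecidableEq α] [DecidableEq β] [DecidableEq γ] {μ : Ω → ℝ}

lemma probOf_nonneg (hμ0 : ∀ ω, 0 ≤ μ ω) (U : Ω → α) (u : α) :
    0 ≤ probOf μ U u :=
  Finset.sum_nonneg fun ω _ => by split_ifs; exacts [hμ0 ω, le_rfl]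

lemma pushforward (μ : Ω → ℝ) (T : Ω → α) (g : α → ℝ) :
    ∑ a, probOf μ T a * g a = ∑ ω, μ ω * g (T ω) := by
  simp only [probOf, Finset.sum_mul, ite_mul, zero_mul]
  rw [Finset.sum_comm]
  simp

lemma entropy_eq (μ : Ω → ℝ) (U : Ω → α) :
    entropy μ U = -∑ ω, μ ω * Real.log (probOf μ U (U ω)) := by
  rw [entropy, pushforward μ U (fun u => Real.log (probOf μ U u))]

lemma sum_probOf (h1 : ∑ ω, μ ω = 1) (T : Ω → α) : ∑ a, probOf μ T a = 1 := by
  have := pushforward μ T (fun _ => 1)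
  simpa [h1] using this

lemma marginal_fst (U : Ω → α) (V : Ω → β) (v : β) :
    ∑ u, probOf μ (fun ω => (U ω, V ω)) (u, v) = probOf μ V v := by
  simp only [probOf]
  rw [Finset.sum_comm]
  apply Finset.sum_congr rfl
  intro ω _
  simp [Prod.ext_iff, ite_and]

lemma marginal_snd (U : Ω → α) (V : Ω → β) (u : α) :
    ∑ v, probOf μ (fun ω => (U ω, V ω)) (u, v) = probOf μ U u := by
  simp only [probOf]
  rw [Finset.sum_comm]
  apply Finset.sum_congr rfl
  intro ω _
  simp [Prod.ext_iff, ite_and]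

lemma probOf_pair_le_fst (hμ0 : ∀ ω, 0 ≤ μ ω) (U : Ω → α) (V : Ω → β) (u : α) (v : β) :
    probOf μ (fun ω => (U ω, V ω)) (u, v) ≤ probOf μ U u := by
  apply Finset.sum_le_sum
  intro ω _
  dsimp only
  split_ifs with h1 h2 h2
  · exact le_rfl
  · exact absurd (Prod.ext_iff.1 h1).1 h2
  · exact hμ0 ω
  · exact le_rfl

lemma probOf_pair_le_snd (hμ0 : ∀ ω, 0 ≤ μ ω) (U : Ω → α) (V : Ω → β) (u : α) (v : β) :
    probOf μ (fun ω => (U ω, V ω)) (u, v) ≤ probOf μ V v := by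
  apply Finset.sum_le_sum
  intro ω _
  dsimp only
  split_ifs with h1 h2 h2
  · exact le_rfl
  · exact absurd (Prod.ext_iff.1 h1).2 h2
  · exact hμ0 ω
  · exact le_rfl

lemma mu_le_probOf (hμ0 : ∀ ω, 0 ≤ μ ω) (U : Ω → α) (ω₀ : Ω) :
    μ ω₀ ≤ probOf μ U (U ω₀) := by
  have := Finset.single_le_sum (f := fun ω => if U ω = U ω₀ then μ ω else 0)
    (fun ω _ => by split_ifs; exacts [hμ0 ω, le_rfl]) (Finset.mem_univ ω₀)
  simpa [probOf] using this

end Lemmas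

section Main
variable {Ω α β γ : Type} [Fintype Ω] [Fintype α] [Fintype β] [Fintype γ]
  [DecidableEq α] [DecidableEq β] [DecidableEq γ] {μ : Ω → ℝ}

lemma entropy_snd_le (hμ0 : ∀ ω, 0 ≤ μ ω) (U : Ω → α) (V : Ω → β) :
    entropy μ V ≤ entropy μ (fun ω => (U ω, V ω)) := by
  rw [entropy_eq, entropy_eq, neg_le_neg_iff]
  apply Finset.sum_le_sum
  intro ω _
  rcases eq_or_lt_of_le (hμ0 ω) with h | h
  · simp [← h]
  · apply mul_le_mul_of_nonneg_left _ (hμ0 ω)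
    apply Real.log_le_log (lt_of_lt_of_le h (mu_le_probOf hμ0 (fun ω => (U ω, V ω)) ω))
    exact probOf_pair_le_snd hμ0 U V _ _

lemma entropy_comp_pair (μ : Ω → ℝ) (X : Ω → α) (φ : α → β) :
    entropy μ (fun ω => (φ (X ω), X ω)) = entropy μ X := by
  rw [entropy_eq, entropy_eq]
  congr 1
  apply Finset.sum_congr rfl
  intro ω _
  have hiff : ∀ ω', ((φ (X ω'), X ω') = (φ (X ω), X ω)) ↔ X ω' = X ω := by
    intro ω'
    constructor
    · intro hh; exact (Prod.ext_iff.1 hh).2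
    · intro hh; rw [hh]
  have : probOf μ (fun ω' => (φ (X ω'), X ω')) (φ (X ω), X ω) = probOf μ X (X ω) := by
    apply Finset.sum_congr rfl
    intro ω' _
    exact if_congr (hiff ω') rfl rfl
  rw [this]

lemma mutualInfo_le_entropy (hμ0 : ∀ ω, 0 ≤ μ ω) (U : Ω → α) (V : Ω → β) :
    mutualInfo μ U V ≤ entropy μ U := by
  have := entropy_snd_le hμ0 U V
  unfold mutualInfo
  linarith

lemma mutualInfo_comp (μ : Ω → ℝ) (X : Ω → α) (φ : α → β) :
    mutualInfo μ (fun ω => φ (X ω)) X = entropy μ (fun ω => φ (X ω)) := by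
  unfold mutualInfo
  rw [entropy_comp_pair μ X φ]
  ring

lemma mutualInfo_le_pair (hμ0 : ∀ ω, 0 ≤ μ ω) (hμ1 : ∑ ω, μ ω = 1)
    (U : Ω → α) (V : Ω → β) (W : Ω → γ) :
    mutualInfo μ U V ≤ mutualInfo μ U (fun ω => (V ω, W ω)) := by
  unfold mutualInfo
  beta_reduce
  have key : entropy μ V + entropy μ (fun ω => (U ω, V ω, W ω)) ≤
      entropy μ (fun ω => (U ω, V ω)) + entropy μ (fun ω => (V ω, W ω)) := by
    set T : Ω → α × β × γ := fun ω => (U ω, V ω, W ω) with hT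
    set Qf : α × β × γ → ℝ := probOf μ T with hQf
    set Af : α × β → ℝ := probOf μ (fun ω => (U ω, V ω)) with hAf
    set Bf : β × γ → ℝ := probOf μ (fun ω => (V ω, W ω)) with hBf
    set Cf : β → ℝ := probOf μ V with hCf
    rw [entropy_eq, entropy_eq, entropy_eq, entropy_eq]
    rw [show ∀ a b c d : ℝ, (-a + -b ≤ -c + -d) ↔ (c + d ≤ a + b) by
      intros; constructor <;> intro <;> linarith]
    rw [← Finset.sum_add_distrib, ← Finset.sum_add_distrib]
    have step1 : ∀ ω, μ ω * Real.log (Af (U ω, V ω)) + μ ω * Real.log (Bf (V ω, W ω))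
        - (μ ω * Real.log (Cf (V ω)) + μ ω * Real.log (Qf (T ω)))
        ≤ μ ω * (Af (U ω, V ω) * Bf (V ω, W ω) / (Qf (T ω) * Cf (V ω))) - μ ω := by
      intro ω
      rcases eq_or_lt_of_le (hμ0 ω) with h | h
      · rw [← h]; simp
      · have hQ : 0 < Qf (T ω) := lt_of_lt_of_le h (mu_le_probOf hμ0 T ω)
        have hA : 0 < Af (U ω, V ω) := lt_of_lt_of_le h (mu_le_probOf hμ0 (fun ω => (U ω, V ω)) ω)
        have hB : 0 < Bf (V ω, W ω) := lt_of_lt_of_le h (mu_le_probOf hμ0 (fun ω => (V ω, W ω)) ω)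
        have hC : 0 < Cf (V ω) := lt_of_lt_of_le h (mu_le_probOf hμ0 V ω)
        have hR : 0 < Af (U ω, V ω) * Bf (V ω, W ω) / (Qf (T ω) * Cf (V ω)) := by positivity
        have hlog : Real.log (Af (U ω, V ω) * Bf (V ω, W ω) / (Qf (T ω) * Cf (V ω)))
            ≤ Af (U ω, V ω) * Bf (V ω, W ω) / (Qf (T ω) * Cf (V ω)) - 1 :=
          Real.log_le_sub_one_of_pos hR
        rw [Real.log_div (by positivity) (by positivity), Real.log_mul hA.ne' hB.ne',
          Real.log_mul hQ.ne' hC.ne'] at hlog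
        nlinarith [mul_le_mul_of_nonneg_left hlog (le_of_lt h)]
    have hsum : ∑ ω, μ ω * (Af (U ω, V ω) * Bf (V ω, W ω) / (Qf (T ω) * Cf (V ω))) ≤ 1 := by
      suffices hQ1 : ∑ t : α × β × γ,
          Qf t * (Af (t.1, t.2.1) * Bf (t.2.1, t.2.2) / (Qf t * Cf t.2.1)) ≤ 1 by
        exact le_of_eq_of_le
          ((pushforward μ T (fun t => Af (t.1, t.2.1) * Bf (t.2.1, t.2.2) / (Qf t * Cf t.2.1))).symm)
          hQ1
      have hbound : ∀ t : α × β × γ,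
          Qf t * (Af (t.1, t.2.1) * Bf (t.2.1, t.2.2) / (Qf t * Cf t.2.1))
          ≤ Af (t.1, t.2.1) * Bf (t.2.1, t.2.2) / Cf t.2.1 := by
        intro t
        rcases eq_or_ne (Qf t) 0 with h0 | h0
        · rw [h0, zero_mul]
          have hA0 := probOf_nonneg hμ0 (fun ω => (U ω, V ω)) (t.1, t.2.1)
          have hB0 := probOf_nonneg hμ0 (fun ω => (V ω, W ω)) (t.2.1, t.2.2)
          have hC0 := probOf_nonneg hμ0 V t.2.1
          positivity
        · rw [mul_div_assoc', mul_div_mul_left _ _ h0]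
      have hone : ∑ t : α × β × γ, Af (t.1, t.2.1) * Bf (t.2.1, t.2.2) / Cf t.2.1 = 1 := by
        rw [Fintype.sum_prod_type]
        simp only [Fintype.sum_prod_type]
        rw [Finset.sum_comm]
        have inner : ∀ b, (∑ a, ∑ c, Af (a, b) * Bf (b, c) / Cf b) = Cf b := by
          intro b
          have h1 : ∀ a, (∑ c, Af (a, b) * Bf (b, c) / Cf b) = Af (a, b) * Cf b / Cf b := by
            intro a
            rw [← Finset.sum_div, ← Finset.mul_sum, marginal_snd V W b]
          rw [Finset.sum_congr rfl (fun a _ => h1 a), ← Finset.sum_div, ← Finset.sum_mul,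
            marginal_fst U V b]
          rcases eq_or_ne (Cf b) 0 with h0 | h0
          · rw [h0]; simp
          · rw [mul_div_assoc, div_self h0, mul_one]
        rw [Finset.sum_congr rfl (fun b _ => inner b)]
        exact sum_probOf hμ1 V
      calc ∑ t, Qf t * (Af (t.1, t.2.1) * Bf (t.2.1, t.2.2) / (Qf t * Cf t.2.1))
          ≤ ∑ t : α × β × γ, Af (t.1, t.2.1) * Bf (t.2.1, t.2.2) / Cf t.2.1 :=
            Finset.sum_le_sum fun t _ => hbound t
        _ = 1 := hone
    have htot := Finset.sum_le_sum fun ω (_ : ω ∈ Finset.univ) => step1 ω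
    rw [Finset.sum_sub_distrib, Finset.sum_sub_distrib, hμ1] at htot
    linarith
  linarith

end Main

/-- in the SCM with `X = h(pa, nd, dc)` (`h` injective) and
`Z = φ(X)`, for every `λ ≥ 0`,
`I(Z; (Y, nd)) − λ·I(Z; (nd, dc)) ≥ I(Z; Y) − λ·I(Z; X)`. -/
theorem stmt_6 {Ω A E1 E2 E3 YT NDT DCT XT ZT : Type}
    [Fintype Ω] [Fintype A] [Fintype E1] [Fintype E2] [Fintype E3]
    [Fintype YT] [Fintype NDT] [Fintype DCT] [Fintype XT] [Fintype ZT]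
    [DecidableEq A] [DecidableEq E1] [DecidableEq E2] [DecidableEq E3]
    [DecidableEq YT] [DecidableEq NDT] [DecidableEq DCT]
    [DecidableEq XT] [DecidableEq ZT]
    (μ : Ω → ℝ) (hμ : IsProb μ)
    (pa : Ω → A) (ε1 : Ω → E1) (ε2 : Ω → E2) (ε3 : Ω → E3)
    (g1 : A → E1 → YT) (g2 : A → E2 → NDT) (g3 : YT → E3 → DCT)
    (Y : Ω → YT) (nd : Ω → NDT) (dc : Ω → DCT)
    (hY : ∀ ω, Y ω = g1 (pa ω) (ε1 ω))
    (hnd : ∀ ω, nd ω = g2 (pa ω) (ε2 ω))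
    (hdc : ∀ ω, dc ω = g3 (Y ω) (ε3 ω))
    (h1 : IndepRV μ ε1 pa)
    (h2 : IndepRV μ ε2 (fun ω => (pa ω, ε1 ω)))
    (h3 : IndepRV μ ε3 (fun ω => (pa ω, ε1 ω, ε2 ω)))
    (h : A × NDT × DCT → XT) (hinj : Function.Injective h)
    (X : Ω → XT) (hX : ∀ ω, X ω = h (pa ω, nd ω, dc ω))
    (φ : XT → ZT) (Z : Ω → ZT) (hZ : ∀ ω, Z ω = φ (X ω))
    (lam : ℝ) (hlam : 0 ≤ lam) :
    mutualInfo μ Z Y - lam * mutualInfo μ Z X ≤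
      mutualInfo μ Z (fun ω => (Y ω, nd ω)) -
        lam * mutualInfo μ Z (fun ω => (nd ω, dc ω)) := by
  obtain ⟨hμ0, hμ1⟩ := hμ
  have e1 : mutualInfo μ Z Y ≤ mutualInfo μ Z (fun ω => (Y ω, nd ω)) :=
    mutualInfo_le_pair hμ0 hμ1 Z Y nd
  have e2 : mutualInfo μ Z (fun ω => (nd ω, dc ω)) ≤ entropy μ Z :=
    mutualInfo_le_entropy hμ0 Z (fun ω => (nd ω, dc ω))
  have e3 : mutualInfo μ Z X = entropy μ Z := by
    have hzf : Z = fun ω => φ (X ω) := funext hZ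
    rw [hzf]
    exact mutualInfo_comp μ X φ
  have e4 : lam * mutualInfo μ Z (fun ω => (nd ω, dc ω)) ≤ lam * mutualInfo μ Z X := by
    rw [e3]
    exact mul_le_mul_of_nonneg_left e2 hlam
  linarith
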